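/- Let K be a field. For each integer m, let P_m, A_m, B_m, L_m, L'_m be K-vector spaces with K-linear maps a_m : P_m → A_m, b_m : A_m → B_m, c_m : B_m → P_{m+1}, d_m : B_m → L_m, N_m : L_m → L'_m, e_m : L'_m → B_{m+1}. Assume: (LES1) the sequence ⋯ → P_m →(a_m) A_m →(b_m) B_m →(c_m) P_{m+1} → ⋯ is exact, i.e. for all m, range a_m = ker b_m, range b_m = ker c_m, and range c_m = ker a_{m+1}; (LES2) the sequence ⋯ → B_m →(d_m) L_m →(N_m) L'_m →(e_m) B_{m+1} → ⋯ is exact, i.e. for all m, range e_{m-1} = ker d_m, range d_m = ker N_m, and range N_m = ker e_m; (DS) for every m, B_m is the internal direct sum of range b_m and range e_{m-1}, i.e. range b_m + range e_{m-1} = B_m and range b_m ∩ range e_{m-1} = 0. Define γ_m = d_m ∘ b_m and δ_m = c_{m+1} ∘ e_m. Then the spliced sequence ⋯ → P_m →(a_m) A_m →(γ_m) L_m →(N_m) L'_m →(δ_m) P_{m+2} →(a_{m+2}) A_{m+2} → ⋯ is exact; that is, for every m: ker γ_m = range a_m, ker N_m = range γ_m, ker δ_m = range N_m, and ker a_{m+2}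 = range δ_m. -/
import Mathlib


/-- The spliced Clemens–Schmid long exact sequence: given two long exact sequences
`⋯ → P m → A m → B m → P (m+1) → ⋯` and `⋯ → B m → L m → L' m → B (m+1) → ⋯`
such that each `B m` is the internal direct sum of the images coming from the two
sequences, the spliced sequence
`⋯ → P m → A m → L m → L' m → P (m+2) → A (m+2) → ⋯` is exact. -/
theorem clemens_schmid_splice {K : Type*} [Field K]
    (P A B L L' : ℤ → Type*)
    [∀ m, AddCommGroup (P m)] [∀ m, Module K (P m)]
    [∀ m, AddCommGroup (A m)] [∀ m, Module K (A m)]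
    [∀ m, AddCommGroup (B m)] [∀ m, Module K (B m)]
    [∀ m, AddCommGroup (L m)] [∀ m, Module K (L m)]
    [∀ m, AddCommGroup (L' m)] [∀ m, Module K (L' m)]
    (a : ∀ m, P m →ₗ[K] A m) (b : ∀ m, A m →ₗ[K] B m)
    (c : ∀ m, B m →ₗ[K] P (m + 1))
    (d : ∀ m, B m →ₗ[K] L m) (N : ∀ m, L m →ₗ[K] L' m)
    (e : ∀ m, L' m →ₗ[K] B (m + 1))
    -- (LES1)
    (hab : ∀ m, LinearMap.range (a m) = LinearMap.ker (b m))
    (hbc : ∀ m, LinearMap.range (b m) = LinearMap.ker (c m))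
    (hca : ∀ m, LinearMap.range (c m) = LinearMap.ker (a (m + 1)))
    -- (LES2)
    (hed : ∀ m, LinearMap.range (e m) = LinearMap.ker (d (m + 1)))
    (hdN : ∀ m, LinearMap.range (d m) = LinearMap.ker (N m))
    (hNe : ∀ m, LinearMap.range (N m) = LinearMap.ker (e m))
    -- (DS)
    (hsum : ∀ m, LinearMap.range (b (m + 1)) ⊔ LinearMap.range (e m) = ⊤)
    (hint : ∀ m, LinearMap.range (b (m + 1)) ⊓ LinearMap.range (e m) = ⊥) :
    ∀ m : ℤ,
      LinearMap.ker ((d m).comp (b m)) = LinearMap.range (a m) ∧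
      LinearMap.ker (N m) = LinearMap.range ((d m).comp (b m)) ∧
      LinearMap.ker ((c (m + 1)).comp (e m)) = LinearMap.range (N m) ∧
      LinearMap.ker (a (m + 1 + 1)) = LinearMap.range ((c (m + 1)).comp (e m)) := by
  intro m
  obtain ⟨n, rfl⟩ : ∃ n : ℤ, n + 1 = m := ⟨m - 1, by omega⟩
  refine ⟨?_, ?_, ?_, ?_⟩
  · apply le_antisymm
    · intro x hx
      have h1 : b (n + 1) x ∈ LinearMap.ker (d (n + 1)) := hx
      rw [← hed n] at h1
      have h0 : b (n + 1) x ∈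
          LinearMap.range (b (n + 1)) ⊓ LinearMap.range (e n) := ⟨⟨x, rfl⟩, h1⟩
      rw [hint n] at h0
      rw [hab (n + 1)]
      simpa using h0
    · rintro _ ⟨y, rfl⟩
      have hb : b (n + 1) (a (n + 1) y) = 0 := by
        have : a (n + 1) y ∈ LinearMap.ker (b (n + 1)) := by
          rw [← hab (n + 1)]; exact ⟨y, rfl⟩
        simpa using this
      simp [LinearMap.mem_ker, hb]
  · apply le_antisymm
    · intro x hx
      rw [← hdN (n + 1)] at hx
      obtain ⟨y, rfl⟩ := hx
      have hy : y ∈ LinearMap.range (b (n + 1)) ⊔ LinearMap.range (e n) := by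
        rw [hsum n]; trivial
      obtain ⟨u, ⟨p, rfl⟩, v, hv, rfl⟩ := Submodule.mem_sup.mp hy
      have hv0 : d (n + 1) v = 0 := by
        have : v ∈ LinearMap.ker (d (n + 1)) := by rw [← hed n]; exact hv
        simpa using this
      exact ⟨p, by simp [hv0]⟩
    · rintro _ ⟨y, rfl⟩
      rw [← hdN (n + 1)]
      exact ⟨b (n + 1) y, rfl⟩
  · apply le_antisymm
    · intro x hx
      have h1 : e (n + 1) x ∈ LinearMap.ker (c (n + 1 + 1)) := hx
      rw [← hbc (n + 1 + 1)] at h1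
      have h0 : e (n + 1) x ∈
          LinearMap.range (b (n + 1 + 1)) ⊓ LinearMap.range (e (n + 1)) := ⟨h1, ⟨x, rfl⟩⟩
      rw [hint (n + 1)] at h0
      rw [hNe (n + 1)]
      simpa using h0
    · rintro _ ⟨y, rfl⟩
      have hb : e (n + 1) (N (n + 1) y) = 0 := by
        have : N (n + 1) y ∈ LinearMap.ker (e (n + 1)) := by
          rw [← hNe (n + 1)]; exact ⟨y, rfl⟩
        simpa using this
      simp [LinearMap.mem_ker, hb]
  · apply le_antisymm
    · intro x hx
      rw [← hca (n + 1 + 1)] at hx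
      obtain ⟨y, rfl⟩ := hx
      have hy : y ∈ LinearMap.range (b (n + 1 + 1)) ⊔ LinearMap.range (e (n + 1)) := by
        rw [hsum (n + 1)]; trivial
      obtain ⟨u, ⟨p, rfl⟩, v, hv, rfl⟩ := Submodule.mem_sup.mp hy
      have hu0 : c (n + 1 + 1) (b (n + 1 + 1) p) = 0 := by
        have : b (n + 1 + 1) p ∈ LinearMap.ker (c (n + 1 + 1)) := by
          rw [← hbc (n + 1 + 1)]; exact ⟨p, rfl⟩
        simpa using this
      obtain ⟨w, rfl⟩ := hv
      exact ⟨w, by simp [hu0]⟩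
    · rintro _ ⟨y, rfl⟩
      rw [← hca (n + 1 + 1)]
      exact ⟨e (n + 1) y, rfl⟩
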